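/- For a nonnegative measurable function f on a probability space with ∫ f dμ = 1, and a measure-preserving involution T, and a [0,1]-valued function g, the inequality ∫ g·(f∘T − f) dμ ≤ (1/(2λ))·∫ (√(f∘T) − √f)² dμ + 2λ holds for every λ > 0. -/

import Mathlib

open MeasureTheory

/-- Young-inequality estimate: for a density `f`, measure-preserving involution `T`,
`g` with values in `[0,1]`, and `λ > 0`:
`∫ g·(f∘T − f) dμ ≤ (1/(2λ))·∫ (√(f∘T) − √f)² dμ + 2λ`. -/
theorem stmt2 {Ω : Type*} [MeasurableSpace Ω] (μ : Measure Ω) [IsProbabilityMeasure μ]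
    (T : Ω → Ω) (hT : MeasurePreserving T μ μ) (hTT : T ∘ T = id)
    (f g : Ω → ℝ) (hf : Measurable f) (hf0 : ∀ ω, 0 ≤ f ω) (hfi : Integrable f μ)
    (hf1 : ∫ ω, f ω ∂μ = 1)
    (hg : Measurable g) (hg0 : ∀ ω, 0 ≤ g ω) (hg1 : ∀ ω, g ω ≤ 1)
    (lam : ℝ) (hlam : 0 < lam) :
    ∫ ω, g ω * (f (T ω) - f ω) ∂μ ≤
      (1 / (2 * lam)) * (∫ ω, (Real.sqrt (f (T ω)) - Real.sqrt (f ω)) ^ 2 ∂μ) + 2 * lam := by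
  have hfT : Integrable (fun ω => f (T ω)) μ := by
    have h1 : Integrable f (Measure.map T μ) := hT.map_eq.symm ▸ hfi
    exact (integrable_map_measure hf.aestronglyMeasurable hT.measurable.aemeasurable).mp h1
  have hfTint : ∫ ω, f (T ω) ∂μ = 1 := by
    rw [← hf1]
    have h2 := integral_map (μ := μ) hT.measurable.aemeasurable hf.aestronglyMeasurable
    rw [hT.map_eq] at h2
    exact h2.symm
  have h2l : (0:ℝ) < 2 * lam := by linarith
  -- pointwise bound
  have key : ∀ ω, g ω * (f (T ω) - f ω) ≤
      (1 / (2 * lam)) * (Real.sqrt (f (T ω)) - Real.sqrt (f ω)) ^ 2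
        + lam * (f (T ω) + f ω) := by
    intro ω
    set s := Real.sqrt (f (T ω)) with hs
    set t := Real.sqrt (f ω) with ht
    have hs0 : 0 ≤ s := Real.sqrt_nonneg _
    have ht0 : 0 ≤ t := Real.sqrt_nonneg _
    have hsq : s ^ 2 = f (T ω) := Real.sq_sqrt (hf0 _)
    have htq : t ^ 2 = f ω := Real.sq_sqrt (hf0 _)
    rw [← hsq, ← htq]
    have H : 0 ≤ (s - t) ^ 2 + 2 * lam * (lam * (s ^ 2 + t ^ 2))
        - 2 * lam * (g ω * (s ^ 2 - t ^ 2)) := by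
      rcases le_or_gt t s with h | h
      · have hst : t ^ 2 ≤ s ^ 2 := pow_le_pow_left₀ ht0 h 2
        have hgb : g ω * (s ^ 2 - t ^ 2) ≤ s ^ 2 - t ^ 2 :=
          mul_le_of_le_one_left (by linarith) (hg1 ω)
        nlinarith [sq_nonneg (s - t - lam * (s + t)),
          mul_nonneg (mul_nonneg hlam.le hlam.le) (sq_nonneg (s - t)),
          mul_nonneg hlam.le (sub_nonneg.2 hgb)]
      · have hst : s ^ 2 ≤ t ^ 2 := pow_le_pow_left₀ hs0 h.le 2
        have hneg : g ω * (s ^ 2 - t ^ 2) ≤ 0 :=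
          mul_nonpos_of_nonneg_of_nonpos (hg0 ω) (by linarith)
        have h3 : 0 ≤ lam * -(g ω * (s ^ 2 - t ^ 2)) :=
          mul_nonneg hlam.le (neg_nonneg.2 hneg)
        nlinarith [sq_nonneg (s - t),
          mul_nonneg (mul_nonneg hlam.le hlam.le) (add_nonneg (sq_nonneg s) (sq_nonneg t))]
    have heq : (1 / (2 * lam)) * ((s - t) ^ 2 + 2 * lam * (lam * (s ^ 2 + t ^ 2))
        - 2 * lam * (g ω * (s ^ 2 - t ^ 2)))
        = (1 / (2 * lam)) * (s - t) ^ 2 + lam * (s ^ 2 + t ^ 2) - g ω * (s ^ 2 - t ^ 2) := by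
      field_simp
    have hpos : (0:ℝ) ≤ 1 / (2 * lam) := by positivity
    nlinarith [mul_nonneg hpos H]
  have hmeas : Measurable (fun ω => (Real.sqrt (f (T ω)) - Real.sqrt (f ω)) ^ 2) :=
    (((hf.comp hT.measurable).sqrt.sub hf.sqrt).pow_const 2)
  have hsum : Integrable (fun ω => f (T ω) + f ω) μ := hfT.add hfi
  have hq : Integrable (fun ω => (Real.sqrt (f (T ω)) - Real.sqrt (f ω)) ^ 2) μ := by
    refine Integrable.mono' hsum hmeas.aestronglyMeasurable ?_
    filter_upwards with ω
    have hs0 := Real.sqrt_nonneg (f (T ω))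
    have ht0 := Real.sqrt_nonneg (f ω)
    have hsq : Real.sqrt (f (T ω)) ^ 2 = f (T ω) := Real.sq_sqrt (hf0 _)
    have htq : Real.sqrt (f ω) ^ 2 = f ω := Real.sq_sqrt (hf0 _)
    rw [Real.norm_eq_abs, abs_of_nonneg (sq_nonneg _)]
    nlinarith [mul_nonneg hs0 ht0]
  have hlhs : Integrable (fun ω => g ω * (f (T ω) - f ω)) μ := by
    refine (hfT.sub hfi).bdd_mul hg.aestronglyMeasurable (c := 1) (Filter.Eventually.of_forall fun ω => ?_)
    rw [Real.norm_eq_abs, abs_of_nonneg (hg0 ω)]; exact hg1 ω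
  have hrhs : Integrable (fun ω =>
      (1 / (2 * lam)) * (Real.sqrt (f (T ω)) - Real.sqrt (f ω)) ^ 2
        + lam * (f (T ω) + f ω)) μ :=
    (hq.const_mul _).add (hsum.const_mul _)
  calc ∫ ω, g ω * (f (T ω) - f ω) ∂μ
      ≤ ∫ ω, ((1 / (2 * lam)) * (Real.sqrt (f (T ω)) - Real.sqrt (f ω)) ^ 2
          + lam * (f (T ω) + f ω)) ∂μ := integral_mono hlhs hrhs key
    _ = (1 / (2 * lam)) * (∫ ω, (Real.sqrt (f (T ω)) - Real.sqrt (f ω)) ^ 2 ∂μ) + 2 * lam := by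
        rw [integral_add (hq.const_mul _) (hsum.const_mul _),
          integral_const_mul, integral_const_mul, integral_add hfT hfi, hfTint, hf1]
        ring
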